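/- arXiv:1304.1863 — 2 statements merged into one kernel-verified Lean document; each statement's English description precedes it below -/
import Mathlib

section
/- Let n ≥ 1 and let Q be an n×n real matrix that is a CTMC generator matrix (all off-diagonal entries are nonnegative and every row sums to zero). Let Λ > 0 satisfy Λ ≥ max_i |Q_{ii}|, and set P = I + Q/Λ. Let t > 0, let U be a natural number, and let π̂ and π be nonnegative row vectors in ℝ^n with ‖π̂‖₁ ≤ 1. Then ‖ π̂ · Σ_{m=0}^{U} e^{−Λt} ((Λt)^m / m!) P^m − π · exp(tQ) ‖₁ ≤ ‖π̂ − π‖₁ + (1 − Σ_{m=0}^{U} e^{−Λt} (Λt)^m / m!), where exp denotes the matrix exponential and ‖·‖₁ is the ℓ¹ norm on row vectors. -/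
open Matrix Finset

/-- Single-interval error bound for truncated uniformization
(exact single-interval form of Theorem 1). -/
theorem truncated_uniformization_error_bound
    {n : ℕ} (hn : 1 ≤ n) (Q : Matrix (Fin n) (Fin n) ℝ)
    (hoff : ∀ i j : Fin n, i ≠ j → 0 ≤ Q i j)
    (hrow : ∀ i : Fin n, ∑ j, Q i j = 0)
    (Λ : ℝ) (hΛ : 0 < Λ) (hΛQ : ∀ i : Fin n, |Q i i| ≤ Λ)
    (t : ℝ) (ht : 0 < t) (U : ℕ)
    (πhat π : Fin n → ℝ)
    (hπhat : ∀ i, 0 ≤ πhat i) (hπ : ∀ i, 0 ≤ π i)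
    (hπhat1 : ∑ i, |πhat i| ≤ 1)
    (P : Matrix (Fin n) (Fin n) ℝ)
    (hP : P = 1 + Λ⁻¹ • Q) :
    ∑ i, |(πhat ᵥ* (∑ m ∈ Finset.range (U + 1),
            (Real.exp (-(Λ * t)) * (Λ * t) ^ m / m.factorial) • P ^ m)) i
          - (π ᵥ* NormedSpace.exp (t • Q)) i|
      ≤ (∑ i, |πhat i - π i|)
        + (1 - ∑ m ∈ Finset.range (U + 1),
              Real.exp (-(Λ * t)) * (Λ * t) ^ m / m.factorial) := by
  classical
  have hΛt : 0 < Λ * t := mul_pos hΛ ht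
  set c : ℕ → ℝ := fun m => Real.exp (-(Λ * t)) * (Λ * t) ^ m / m.factorial with hc
  set E : Matrix (Fin n) (Fin n) ℝ := NormedSpace.exp (t • Q) with hE
  set A : Matrix (Fin n) (Fin n) ℝ := ∑ m ∈ Finset.range (U + 1), c m • P ^ m with hA
  set s : ℝ := ∑ m ∈ Finset.range (U + 1), c m with hs
  -- nonnegativity of the Poisson weights
  have hcnn : ∀ m, 0 ≤ c m := by
    intro m
    have := Real.exp_pos (-(Λ * t))
    positivity
  -- P is stochastic
  have hPnn : ∀ i j, 0 ≤ P i j := by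
    intro i j
    rcases eq_or_ne i j with rfl | hij
    · have h1 : -Λ ≤ Q i i := (abs_le.mp (hΛQ i)).1
      have hPe : P i i = 1 + Λ⁻¹ * Q i i := by
        simp [hP, Matrix.add_apply, Matrix.one_apply, Matrix.smul_apply]
      rw [hPe]
      have hinv : 0 < Λ⁻¹ := inv_pos.mpr hΛ
      have h2 : Λ⁻¹ * (-Λ) ≤ Λ⁻¹ * Q i i := by
        exact mul_le_mul_of_nonneg_left h1 hinv.le
      have h3 : Λ⁻¹ * (-Λ) = -1 := by field_simp
      linarith
    · have hPe : P i j = Λ⁻¹ * Q i j := by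
        simp [hP, Matrix.add_apply, Matrix.one_apply, Matrix.smul_apply, hij]
      rw [hPe]
      exact mul_nonneg (inv_pos.mpr hΛ).le (hoff i j hij)
  have hProw : ∀ i, ∑ j, P i j = 1 := by
    intro i
    simp only [hP, Matrix.add_apply, Matrix.smul_apply, smul_eq_mul]
    rw [Finset.sum_add_distrib, ← Finset.mul_sum, hrow, mul_zero, add_zero]
    simp [Matrix.one_apply]
  -- powers of P are stochastic
  have hPm : ∀ m : ℕ, (∀ i j, 0 ≤ (P ^ m) i j) ∧ (∀ i, ∑ j, (P ^ m) i j = 1) := by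
    intro m
    induction m with
    | zero =>
      constructor
      · intro i j; simp [Matrix.one_apply]; split <;> norm_num
      · intro i; simp [Matrix.one_apply]
    | succ m ih =>
      constructor
      · intro i j
        rw [pow_succ, Matrix.mul_apply]
        exact Finset.sum_nonneg fun k _ => mul_nonneg (ih.1 i k) (hPnn k j)
      · intro i
        simp only [pow_succ, Matrix.mul_apply]
        rw [Finset.sum_comm]
        calc ∑ k, ∑ j, (P ^ m) i k * P k j
            = ∑ k, (P ^ m) i k * ∑ j, P k j := by
              simp [Finset.mul_sum]
          _ = 1 := by simp [hProw, ih.2 i]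
  -- the scalar Poisson series sums to 1
  have hcsum : HasSum c 1 := by
    have h := (NormedSpace.expSeries_div_hasSum_exp (Λ * t)).mul_left
      (Real.exp (-(Λ * t)))
    have h2 : Real.exp (-(Λ * t)) * NormedSpace.exp (Λ * t) = 1 := by
      rw [← Real.exp_eq_exp_ℝ, ← Real.exp_add]
      simp
    rw [h2] at h
    convert h using 2 with m
    · rfl
    simp [hc, mul_div_assoc]
  -- the matrix series sums to E
  have hEsum : HasSum (fun m => c m • P ^ m) E := by
    letI : SeminormedRing (Matrix (Fin n) (Fin n) ℝ) := Matrix.linftyOpSemiNormedRing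
    letI : NormedRing (Matrix (Fin n) (Fin n) ℝ) := Matrix.linftyOpNormedRing
    letI : NormedAlgebra ℝ (Matrix (Fin n) (Fin n) ℝ) := Matrix.linftyOpNormedAlgebra
    have h1 := NormedSpace.exp_series_hasSum_exp' (𝕂 := ℝ) ((Λ * t) • P)
    have h2 := h1.const_smul (Real.exp (-(Λ * t)))
    have hterm : (fun m : ℕ => Real.exp (-(Λ * t)) •
        (((m.factorial : ℝ)⁻¹) • ((Λ * t) • P) ^ m)) = fun m => c m • P ^ m := by
      funext m
      rw [smul_pow, smul_smul, smul_smul]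
      congr 1
      rw [hc]
      field_simp
      try ring
    rw [hterm] at h2
    -- identify the sum value
    have hQeq : t • Q = (-(Λ * t)) • (1 : Matrix (Fin n) (Fin n) ℝ) + (Λ * t) • P := by
      have hΛ0 : Λ ≠ 0 := ne_of_gt hΛ
      rw [hP]
      match_scalars <;> field_simp <;> ring
    have hexp1 : NormedSpace.exp ((-(Λ * t)) • (1 : Matrix (Fin n) (Fin n) ℝ))
        = Real.exp (-(Λ * t)) • (1 : Matrix (Fin n) (Fin n) ℝ) := by
      have h3 := (NormedSpace.expSeries_div_hasSum_exp (-(Λ * t))).smul_const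
        (1 : Matrix (Fin n) (Fin n) ℝ)
      have h4 : HasSum (fun m : ℕ => ((m.factorial : ℝ)⁻¹) •
          ((-(Λ * t)) • (1 : Matrix (Fin n) (Fin n) ℝ)) ^ m)
          (NormedSpace.exp (-(Λ * t)) • (1 : Matrix (Fin n) (Fin n) ℝ)) := by
        convert h3 using 2 with m
        rw [smul_pow, one_pow, smul_smul]
        congr 1
        rw [div_eq_mul_inv, mul_comm]
      have h5 := (NormedSpace.exp_series_hasSum_exp' (𝕂 := ℝ)
        ((-(Λ * t)) • (1 : Matrix (Fin n) (Fin n) ℝ))).unique h4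
      rw [← Real.exp_eq_exp_ℝ] at h5
      exact h5
    have hmul : E = Real.exp (-(Λ * t)) • NormedSpace.exp ((Λ * t) • P) := by
      rw [hE, hQeq, Matrix.exp_add_of_commute _ _
        (((Commute.one_left P).smul_left (-(Λ * t))).smul_right (Λ * t)),
        hexp1, smul_mul_assoc, one_mul]
    rw [hmul]
    exact h2
  -- entrywise sums for E
  have hEapp : ∀ i j, HasSum (fun m => c m * (P ^ m) i j) (E i j) := by
    intro i j
    have h1 := (Pi.hasSum.mp ((Pi.hasSum.mp hEsum) i)) j
    simpa [Matrix.smul_apply, smul_eq_mul] using h1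
  have hEnn : ∀ i j, 0 ≤ E i j := by
    intro i j
    exact (hEapp i j).nonneg fun m => mul_nonneg (hcnn m) ((hPm m).1 i j)
  have hErow : ∀ i, ∑ j, E i j = 1 := by
    intro i
    have h1 : HasSum (fun m => ∑ j, c m * (P ^ m) i j) (∑ j, E i j) :=
      hasSum_sum fun j _ => hEapp i j
    have h2 : (fun m => ∑ j, c m * (P ^ m) i j) = c := by
      funext m
      rw [← Finset.mul_sum, (hPm m).2 i, mul_one]
    rw [h2] at h1
    exact h1.unique hcsum
  -- tail of the matrix series
  have hTsum : HasSum (fun m => c (m + (U + 1)) • P ^ (m + (U + 1))) (E - A) := by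
    refine (hasSum_nat_add_iff (f := fun m => c m • P ^ m) (U + 1)).mpr ?_
    simpa [hA] using hEsum
  have hTapp : ∀ i j, HasSum (fun m => c (m + (U + 1)) * (P ^ (m + (U + 1))) i j)
      ((E - A) i j) := by
    intro i j
    have h1 := (Pi.hasSum.mp ((Pi.hasSum.mp hTsum) i)) j
    simpa [Matrix.smul_apply, smul_eq_mul] using h1
  have hTnn : ∀ i j, 0 ≤ (E - A) i j := by
    intro i j
    exact (hTapp i j).nonneg fun m => mul_nonneg (hcnn _) ((hPm _).1 i j)
  have hctail : HasSum (fun m => c (m + (U + 1))) (1 - s) := by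
    refine (hasSum_nat_add_iff (f := c) (U + 1)).mpr ?_
    simpa [hs] using hcsum
  have hTrow : ∀ i, ∑ j, (E - A) i j = 1 - s := by
    intro i
    have h1 : HasSum (fun m => ∑ j, c (m + (U + 1)) * (P ^ (m + (U + 1))) i j)
        (∑ j, (E - A) i j) := hasSum_sum fun j _ => hTapp i j
    have h2 : (fun m => ∑ j, c (m + (U + 1)) * (P ^ (m + (U + 1))) i j)
        = fun m => c (m + (U + 1)) := by
      funext m
      rw [← Finset.mul_sum, (hPm _).2 i, mul_one]
    rw [h2] at h1
    exact h1.unique hctail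
  have hs1 : s ≤ 1 := by
    rw [hs]
    exact sum_le_hasSum _ (fun m _ => hcnn m) hcsum
  -- vecMul unfolding
  have hvm : ∀ (v : Fin n → ℝ) (M : Matrix (Fin n) (Fin n) ℝ) (j : Fin n),
      (v ᵥ* M) j = ∑ i, v i * M i j := by
    intro v M j
    simp [Matrix.vecMul, dotProduct]
  -- final estimate
  have key : ∀ j, (πhat ᵥ* A) j - (π ᵥ* E) j
      = (∑ i, (πhat i - π i) * E i j) - ∑ i, πhat i * (E - A) i j := by
    intro j
    rw [hvm, hvm, ← Finset.sum_sub_distrib, ← Finset.sum_sub_distrib]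
    congr 1
    funext i
    simp [Matrix.sub_apply]
    ring
  calc ∑ j, |(πhat ᵥ* A) j - (π ᵥ* E) j|
      ≤ ∑ j, ((∑ i, |πhat i - π i| * E i j) + ∑ i, πhat i * (E - A) i j) := by
        apply Finset.sum_le_sum
        intro j _
        rw [key j]
        refine (abs_sub _ _).trans ?_
        gcongr
        · calc |∑ i, (πhat i - π i) * E i j| ≤ ∑ i, |(πhat i - π i) * E i j| :=
              Finset.abs_sum_le_sum_abs _ _
            _ = ∑ i, |πhat i - π i| * E i j := by
              apply Finset.sum_congr rfl
              intro i _
              rw [abs_mul, abs_of_nonneg (hEnn i j)]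
        · rw [abs_of_nonneg]
          exact Finset.sum_nonneg fun i _ => mul_nonneg (hπhat i) (hTnn i j)
    _ = (∑ i, |πhat i - π i| * ∑ j, E i j) + ∑ i, πhat i * ∑ j, (E - A) i j := by
        rw [Finset.sum_add_distrib, Finset.sum_comm]
        congr 1
        · apply Finset.sum_congr rfl; intro i _; rw [Finset.mul_sum]
        · rw [Finset.sum_comm]
          apply Finset.sum_congr rfl; intro i _; rw [Finset.mul_sum]
    _ = (∑ i, |πhat i - π i|) + (∑ i, πhat i) * (1 - s) := by
        congr 1
        · apply Finset.sum_congr rfl; intro i _; rw [hErow i, mul_one]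
        · rw [Finset.sum_mul]
          apply Finset.sum_congr rfl; intro i _; rw [hTrow i]
    _ ≤ (∑ i, |πhat i - π i|) + (1 - s) := by
        have h1 : ∑ i, πhat i ≤ 1 := by
          calc ∑ i, πhat i = ∑ i, |πhat i| :=
              Finset.sum_congr rfl fun i _ => (abs_of_nonneg (hπhat i)).symm
            _ ≤ 1 := hπhat1
        have h2 : 0 ≤ 1 - s := by linarith
        have h3 : (∑ i, πhat i) * (1 - s) ≤ 1 * (1 - s) :=
          mul_le_mul_of_nonneg_right h1 h2
        linarith
end

section
/- Let n ≥ 1, let s·T > 0 be a positive real, and for each l = 0, 1, …, L−1 let Q_l be an n×n CTMC generator matrix (off-diagonal entries nonnegative, zero row sums), let Λ_l > 0 satisfy Λ_l ≥ max_i |(Q_l)_{ii}|, set P_l = I + Q_l/Λ_l, and let U_l be a natural number. Define sequences of row vectors by π̃_0 = π̂_0, where π̂_0 is a probability vector (nonnegative entries summing to 1), and by π̃_{l+1} = π̃_l · exp(sT · Q_l) and π̂_{l+1} = π̂_l · Σ_{m=0}^{U_l} e^{−Λ_l sT} ((Λ_l sT)^m / m!) P_l^m. Then for every L ≥ 0,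 ‖π̂_L − π̃_L‖₁ ≤ Σ_{l=0}^{L−1} (1 − Σ_{m=0}^{U_l} e^{−Λ_l sT} (Λ_l sT)^m / m!). -/
open Matrix Finset

open NormedSpace in
lemma hasSum_exp_key {n : ℕ} (Pm : Matrix (Fin n) (Fin n) ℝ) (c : ℝ) :
    HasSum (fun m : ℕ => (Real.exp (-c) * c ^ m / m.factorial) • Pm ^ m)
      (exp (c • (Pm - 1))) := by
  letI : SeminormedRing (Matrix (Fin n) (Fin n) ℝ) := Matrix.linftyOpSemiNormedRing
  letI : NormedRing (Matrix (Fin n) (Fin n) ℝ) := Matrix.linftyOpNormedRing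
  letI : NormedAlgebra ℝ (Matrix (Fin n) (Fin n) ℝ) := Matrix.linftyOpNormedAlgebra
  have h1 : c • (Pm - 1) = (-c) • (1 : Matrix (Fin n) (Fin n) ℝ) + c • Pm := by
    rw [smul_sub, neg_smul]; abel
  have hcomm : Commute ((-c) • (1 : Matrix (Fin n) (Fin n) ℝ)) (c • Pm) :=
    ((Commute.one_left (c • Pm)).smul_left (-c))
  have h2 : exp (c • (Pm - 1)) = Real.exp (-c) • exp (c • Pm) := by
    rw [h1, Matrix.exp_add_of_commute _ _ hcomm]
    have h3 : ((-c) • (1 : Matrix (Fin n) (Fin n) ℝ)) = algebraMap ℝ _ (-c) :=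
      (Algebra.algebraMap_eq_smul_one (-c)).symm
    erw [h3, ← algebraMap_exp_comm]
    rw [ ← Real.exp_eq_exp_ℝ, Algebra.algebraMap_eq_smul_one,
      smul_mul_assoc, one_mul]
  rw [h2]
  have hsum : HasSum (fun m : ℕ => Real.exp (-c) • ((m.factorial : ℝ)⁻¹ • (c • Pm) ^ m))
      (Real.exp (-c) • exp (c • Pm)) :=
    (exp_series_hasSum_exp' (𝕂 := ℝ) (c • Pm)).const_smul (Real.exp (-c))
  convert hsum using 2 with m
  rw [smul_pow, smul_smul, smul_smul]
  congr 1
  field_simp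

lemma stoch_pow {n : ℕ} (A : Matrix (Fin n) (Fin n) ℝ)
    (h1 : ∀ i j, 0 ≤ A i j) (h2 : ∀ i, ∑ j, A i j = 1) (m : ℕ) :
    (∀ i j, 0 ≤ (A ^ m) i j) ∧ ∀ i, ∑ j, (A ^ m) i j = 1 := by
  induction m with
  | zero =>
    constructor
    · intro i j; simp [Matrix.one_apply]; positivity
    · intro i; simp [Matrix.one_apply]
  | succ m ih =>
    rw [pow_succ]
    constructor
    · intro i j
      rw [Matrix.mul_apply]
      exact Finset.sum_nonneg fun k _ => mul_nonneg (ih.1 i k) (h1 k j)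
    · intro i
      simp_rw [Matrix.mul_apply]
      rw [Finset.sum_comm]
      simp_rw [← Finset.mul_sum, h2]
      simpa using ih.2 i

lemma entry_hasSum {n : ℕ} {f : ℕ → Matrix (Fin n) (Fin n) ℝ} {A : Matrix (Fin n) (Fin n) ℝ}
    (h : HasSum f A) (i j : Fin n) : HasSum (fun m => f m i j) (A i j) :=
  Pi.hasSum.mp (Pi.hasSum.mp h i) j

/-- Accumulated error bound of the truncated uniformization
approximation over consecutive intervals of length `sT` (Theorem 1). -/
theorem accumulated_uniformization_error_bound
    {n : ℕ} (hn : 1 ≤ n) (sT : ℝ) (hsT : 0 < sT)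
    (Q : ℕ → Matrix (Fin n) (Fin n) ℝ)
    (hoff : ∀ l, ∀ i j : Fin n, i ≠ j → 0 ≤ Q l i j)
    (hrow : ∀ l, ∀ i : Fin n, ∑ j, Q l i j = 0)
    (Λ : ℕ → ℝ) (hΛ : ∀ l, 0 < Λ l)
    (hΛQ : ∀ l, ∀ i : Fin n, |Q l i i| ≤ Λ l)
    (P : ℕ → Matrix (Fin n) (Fin n) ℝ)
    (hP : ∀ l, P l = 1 + (Λ l)⁻¹ • Q l)
    (U : ℕ → ℕ)
    (π0 : Fin n → ℝ) (hπ0 : ∀ i, 0 ≤ π0 i) (hπ0sum : ∑ i, π0 i = 1)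
    (πtilde πhat : ℕ → Fin n → ℝ)
    (hπtilde0 : πtilde 0 = π0) (hπhat0 : πhat 0 = π0)
    (hπtilde : ∀ l, πtilde (l + 1) = πtilde l ᵥ* NormedSpace.exp (sT • Q l))
    (hπhat : ∀ l, πhat (l + 1) = πhat l ᵥ* (∑ m ∈ Finset.range (U l + 1),
        (Real.exp (-(Λ l * sT)) * (Λ l * sT) ^ m / m.factorial) • (P l) ^ m)) :
    ∀ L : ℕ,
      ∑ i, |πhat L i - πtilde L i|
        ≤ ∑ l ∈ Finset.range L,
            (1 - ∑ m ∈ Finset.range (U l + 1),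
                Real.exp (-(Λ l * sT)) * (Λ l * sT) ^ m / m.factorial) := by
  -- notation
  set w : ℕ → ℕ → ℝ := fun l m => Real.exp (-(Λ l * sT)) * (Λ l * sT) ^ m / m.factorial with hw_def
  set E : ℕ → Matrix (Fin n) (Fin n) ℝ := fun l => NormedSpace.exp (sT • Q l) with hE_def
  set M : ℕ → Matrix (Fin n) (Fin n) ℝ :=
    fun l => ∑ m ∈ Finset.range (U l + 1), w l m • (P l) ^ m with hM_def
  set S : ℕ → ℝ := fun l => ∑ m ∈ Finset.range (U l + 1), w l m with hS_def
  have hΛne : ∀ l, (Λ l : ℝ) ≠ 0 := fun l => (hΛ l).ne'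
  have hc : ∀ l, 0 < Λ l * sT := fun l => mul_pos (hΛ l) hsT
  -- vecMul unfolding
  have hv : ∀ (v : Fin n → ℝ) (A : Matrix (Fin n) (Fin n) ℝ) (j : Fin n),
      (v ᵥ* A) j = ∑ i, v i * A i j := by
    intro v A j; simp [Matrix.vecMul, dotProduct]
  -- P is stochastic
  have hPnn : ∀ l i j, 0 ≤ P l i j := by
    intro l i j
    rw [hP]
    rcases eq_or_ne i j with rfl | hij
    · have h1 : -(Λ l) ≤ Q l i i := (abs_le.mp (hΛQ l i)).1
      simp only [Matrix.add_apply, Matrix.one_apply_eq, Matrix.smul_apply, smul_eq_mul]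
      have h2 : (Λ l)⁻¹ * (-(Λ l)) ≤ (Λ l)⁻¹ * Q l i i :=
        mul_le_mul_of_nonneg_left h1 (inv_pos.mpr (hΛ l)).le
      rw [mul_neg, inv_mul_cancel₀ (hΛ l).ne'] at h2
      linarith
    · simp only [Matrix.add_apply, Matrix.one_apply_ne hij, Matrix.smul_apply, smul_eq_mul,
        zero_add]
      exact mul_nonneg (le_of_lt (inv_pos.mpr (hΛ l))) (hoff l i j hij)
  have hProw : ∀ l i, ∑ j, P l i j = 1 := by
    intro l i
    rw [hP]
    simp only [Matrix.add_apply, Matrix.smul_apply, smul_eq_mul, Finset.sum_add_distrib,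
      ← Finset.mul_sum, hrow l i, mul_zero, add_zero]
    simp [Matrix.one_apply, Finset.sum_ite_eq]
  have hpow := fun l => stoch_pow (P l) (hPnn l) (hProw l)
  -- weights
  have hwnn : ∀ l m, 0 ≤ w l m := by
    intro l m
    have := (hc l).le
    positivity
  have hwsum : ∀ l, HasSum (w l) 1 := by
    intro l
    have h1 : HasSum (fun m : ℕ => (Λ l * sT) ^ m / m.factorial)
        (NormedSpace.exp (Λ l * sT)) := NormedSpace.expSeries_div_hasSum_exp (Λ l * sT)
    rw [← Real.exp_eq_exp_ℝ] at h1
    have h2 := h1.mul_left (Real.exp (-(Λ l * sT)))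
    have h3 : Real.exp (-(Λ l * sT)) * Real.exp (Λ l * sT) = 1 := by
      rw [← Real.exp_add]; simp
    rw [h3] at h2
    have h4 : w l = fun i => Real.exp (-(Λ l * sT)) * ((Λ l * sT) ^ i / i.factorial) :=
      funext fun m => mul_div_assoc (Real.exp (-(Λ l * sT))) ((Λ l * sT) ^ m) (m.factorial : ℝ)
    rw [h4]; exact h2
  -- E as a series
  have hE : ∀ l, HasSum (fun m => w l m • (P l) ^ m) (E l) := by
    intro l
    have heq : sT • Q l = (Λ l * sT) • (P l - 1) := by
      have : P l - 1 = (Λ l)⁻¹ • Q l := by rw [hP]; abel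
      rw [this, smul_smul]
      congr 1
      rw [mul_comm (Λ l) sT, mul_assoc, mul_inv_cancel₀ (hΛne l), mul_one]
    simpa [hE_def, heq] using hasSum_exp_key (P l) (Λ l * sT)
  have hEij : ∀ l i j, HasSum (fun m => w l m * ((P l) ^ m) i j) (E l i j) := by
    intro l i j
    simpa using entry_hasSum (hE l) i j
  have hEnn : ∀ l i j, 0 ≤ E l i j := fun l i j =>
    (hEij l i j).nonneg fun m => mul_nonneg (hwnn l m) ((hpow l m).1 i j)
  have hErow : ∀ l i, ∑ j, E l i j = 1 := by
    intro l i
    have h1 : HasSum (fun m => ∑ j, w l m * ((P l) ^ m) i j) (∑ j, E l i j) :=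
      hasSum_sum fun j _ => hEij l i j
    have h2 : (fun m => ∑ j, w l m * ((P l) ^ m) i j) = w l := by
      funext m
      rw [← Finset.mul_sum, (hpow l m).2 i, mul_one]
    rw [h2] at h1
    exact h1.unique (hwsum l)
  -- M facts
  have hMapply : ∀ l i j, M l i j = ∑ m ∈ Finset.range (U l + 1), w l m * ((P l) ^ m) i j := by
    intro l i j
    simp [hM_def, Matrix.sum_apply]
  have hMnn : ∀ l i j, 0 ≤ M l i j := by
    intro l i j
    rw [hMapply]
    exact Finset.sum_nonneg fun m _ => mul_nonneg (hwnn l m) ((hpow l m).1 i j)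
  have hMrow : ∀ l i, ∑ j, M l i j = S l := by
    intro l i
    simp_rw [hMapply]
    rw [Finset.sum_comm]
    simp_rw [← Finset.mul_sum]
    exact Finset.sum_congr rfl fun m _ => by rw [(hpow l m).2 i, mul_one]
  have hME : ∀ l i j, M l i j ≤ E l i j := by
    intro l i j
    rw [hMapply]
    exact sum_le_hasSum _ (fun m _ => mul_nonneg (hwnn l m) ((hpow l m).1 i j)) (hEij l i j)
  have hS1 : ∀ l, S l ≤ 1 :=
    fun l => sum_le_hasSum _ (fun m _ => hwnn l m) (hwsum l)
  -- πtilde is a probability vector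
  have hprob : ∀ l, (∀ i, 0 ≤ πtilde l i) ∧ ∑ i, πtilde l i = 1 := by
    intro l
    induction l with
    | zero => rw [hπtilde0]; exact ⟨hπ0, hπ0sum⟩
    | succ l ih =>
      rw [hπtilde l, show NormedSpace.exp (sT • Q l) = E l from rfl]
      constructor
      · intro j
        rw [hv]
        exact Finset.sum_nonneg fun i _ => mul_nonneg (ih.1 i) (hEnn l i j)
      · simp_rw [hv]
        rw [Finset.sum_comm]
        simp_rw [← Finset.mul_sum, hErow l]
        simpa using ih.2
  -- main induction
  intro L
  induction L with
  | zero => simp [hπtilde0, hπhat0]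
  | succ L ih =>
    rw [Finset.sum_range_succ]
    have key : ∑ i, |πhat (L + 1) i - πtilde (L + 1) i|
        ≤ (∑ i, |πhat L i - πtilde L i|) + (1 - S L) := by
      have hrw : ∀ j, πhat (L + 1) j - πtilde (L + 1) j
          = (∑ i, (πhat L i - πtilde L i) * M L i j)
            + (∑ i, πtilde L i * (M L i j - E L i j)) := by
        intro j
        rw [hπhat L, hπtilde L, show NormedSpace.exp (sT • Q L) = E L from rfl, hv, hv]
        rw [← Finset.sum_sub_distrib, ← Finset.sum_add_distrib]
        exact Finset.sum_congr rfl fun i _ => by ring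
      calc ∑ j, |πhat (L + 1) j - πtilde (L + 1) j|
          ≤ ∑ j, ((∑ i, |πhat L i - πtilde L i| * M L i j)
              + (∑ i, πtilde L i * (E L i j - M L i j))) := by
            apply Finset.sum_le_sum
            intro j _
            rw [hrw j]
            refine le_trans (abs_add_le _ _) (add_le_add ?_ ?_)
            · refine le_trans (Finset.abs_sum_le_sum_abs _ _) (Finset.sum_le_sum fun i _ => ?_)
              rw [abs_mul, abs_of_nonneg (hMnn L i j)]
            · refine le_trans (Finset.abs_sum_le_sum_abs _ _) (Finset.sum_le_sum fun i _ => ?_)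
              rw [abs_mul, abs_of_nonneg ((hprob L).1 i), abs_of_nonpos (by
                linarith [hME L i j])]
              exact le_of_eq (by ring)
        _ = (∑ i, |πhat L i - πtilde L i| * S L) + (∑ i, πtilde L i * (1 - S L)) := by
            rw [Finset.sum_add_distrib]
            congr 1
            · rw [Finset.sum_comm]
              exact Finset.sum_congr rfl fun i _ => by
                rw [← Finset.mul_sum, hMrow L i]
            · rw [Finset.sum_comm]
              refine Finset.sum_congr rfl fun i _ => ?_
              rw [← Finset.mul_sum, Finset.sum_sub_distrib, hErow L i, hMrow L i]
        _ ≤ (∑ i, |πhat L i - πtilde L i|) + (1 - S L) := by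
            refine add_le_add (Finset.sum_le_sum fun i _ => ?_) ?_
            · exact mul_le_of_le_one_right (abs_nonneg _) (hS1 L)
            · rw [← Finset.sum_mul, (hprob L).2, one_mul]
    linarith [key, ih]
end
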